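/- If F satisfies Δ_q F(x) + [λ - V(x)] F(x) = 0 on ℝ_q^+ with V real-valued and λ = μ + iν, then 2ν ∫_0^b |F(x)|² d_q x = i W_0(F, F̄) - i W_b(F, F̄), where F̄ is the complex conjugate of F. -/

import Mathlib

open Filter Topology Complex

/-- The `q`-derivative. -/
noncomputable def qDeriv (q : ℝ) (f : ℝ → ℂ) (x : ℝ) : ℂ :=
  (f x - f (q * x)) / (((1 - q) * x : ℝ) : ℂ)

/-- The `q`-Laplace operator. -/
noncomputable def qLap (q : ℝ) (f : ℝ → ℂ) (x : ℝ) : ℂ :=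
  ((1 / x ^ 2 : ℝ) : ℂ) *
    (f (x / q) - (((1 + q) / q : ℝ) : ℂ) * f x + ((1 / q : ℝ) : ℂ) * f (q * x))

/-- The `q`-Wronskian. -/
noncomputable def qWronskian (q : ℝ) (F G : ℝ → ℂ) (x : ℝ) : ℂ :=
  (((1 - q) ^ 2 / q : ℝ) : ℂ) *
    (F x * qDeriv q G (x / q) - G x * qDeriv q F (x / q))

/-- Real-valued Jackson integral `∫_0^b g d_q x = (1-q) Σ_{n≥0} qⁿ b g(bqⁿ)`. -/
noncomputable def jackson0bR (q : ℝ) (g : ℝ → ℝ) (b : ℝ) : ℝ :=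
  (1 - q) * ∑' n : ℕ, q ^ n * b * g (b * q ^ n)

/-- If `Δ_q F + (λ - V)F = 0` on `ℝ_q^+` with `V` real-valued and `λ = μ + iν`, then
`2ν ∫_0^b |F|² d_q x = i W_0(F, F̄) - i W_b(F, F̄)`. -/
theorem stmt4 (q : ℝ) (hq0 : 0 < q) (hq1 : q < 1) (V : ℝ → ℝ) (F : ℝ → ℂ)
    (mu nu : ℝ)
    (hF : ∀ n : ℤ, qLap q F (q ^ n)
      + (((mu : ℂ) + (nu : ℂ) * Complex.I) - (V (q ^ n) : ℂ)) * F (q ^ n) = 0)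
    (k : ℤ) (b : ℝ) (hb : b = q ^ k)
    (W0 : ℂ)
    (hW0 : Tendsto (fun n : ℕ =>
      qWronskian q F (fun x => (starRingEnd ℂ) (F x)) (q ^ n)) atTop (𝓝 W0))
    (hS : Summable (fun n : ℕ => q ^ n * b * ‖F (b * q ^ n)‖ ^ 2)) :
    ((2 * nu * jackson0bR q (fun x => ‖F x‖ ^ 2) b : ℝ) : ℂ)
      = Complex.I * W0
        - Complex.I * qWronskian q F (fun x => (starRingEnd ℂ) (F x)) b := by
  have hq : (q : ℝ) ≠ 0 := ne_of_gt hq0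
  have hq1' : (1 - q : ℝ) ≠ 0 := by linarith
  set G : ℝ → ℂ := fun x => (starRingEnd ℂ) (F x) with hGdef
  have hqLapG : ∀ x : ℝ, qLap q G x = (starRingEnd ℂ) (qLap q F x) := by
    intro x
    simp only [qLap, hGdef, map_mul, map_sub, map_add, Complex.conj_ofReal]
  -- key pointwise Lagrange identity
  have key : ∀ x : ℝ, x ≠ 0 →
      qWronskian q F G x - qWronskian q F G (q * x)
        = (((1 - q) * x : ℝ) : ℂ) * (F x * qLap q G x - G x * qLap q F x) := by
    intro x hx
    have h1 : q * (x / q) = x := by field_simp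
    have h2 : q * x / q = x := by field_simp
    simp only [qWronskian, qDeriv, qLap, h2, h1]
    have hxC : (x : ℂ) ≠ 0 := by exact_mod_cast hx
    have hqC : (q : ℂ) ≠ 0 := by exact_mod_cast hq
    have h1qC : ((1 - q : ℝ) : ℂ) ≠ 0 := by exact_mod_cast hq1'
    have h3 : (1 - (q : ℂ)) ≠ 0 := by push_cast at h1qC; exact h1qC
    push_cast
    field_simp
    ring
  -- the eigenvalue identity at lattice points
  have hlam : ∀ m : ℤ,
      F ((q : ℝ) ^ m) * qLap q G ((q : ℝ) ^ m) - G ((q : ℝ) ^ m) * qLap q F ((q : ℝ) ^ m)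
        = 2 * (nu : ℂ) * Complex.I * ((‖F ((q : ℝ) ^ m)‖ ^ 2 : ℝ) : ℂ) := by
    intro m
    have h := hF m
    have hLap : qLap q F ((q : ℝ) ^ m)
        = ((V ((q : ℝ) ^ m) : ℂ) - ((mu : ℂ) + (nu : ℂ) * Complex.I)) * F ((q : ℝ) ^ m) := by
      linear_combination h
    have hLapG : qLap q G ((q : ℝ) ^ m)
        = ((V ((q : ℝ) ^ m) : ℂ) - ((mu : ℂ) - (nu : ℂ) * Complex.I)) * G ((q : ℝ) ^ m) := by
      rw [hqLapG, hLap]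
      simp only [map_mul, map_sub, map_add, Complex.conj_ofReal, Complex.conj_I, hGdef]
      ring
    have hFG : F ((q : ℝ) ^ m) * G ((q : ℝ) ^ m)
        = ((‖F ((q : ℝ) ^ m)‖ ^ 2 : ℝ) : ℂ) := by
      rw [hGdef]
      rw [Complex.sq_norm]
      exact Complex.mul_conj _
    rw [hLap, hLapG]
    linear_combination (2 * (nu : ℂ) * Complex.I) * hFG
  -- set up the telescoping sequence
  set w : ℕ → ℂ := fun n => qWronskian q F G ((q : ℝ) ^ (k + n : ℤ)) with hwdef
  set a : ℕ → ℂ := fun n => ((q ^ n * b * ‖F (b * q ^ n)‖ ^ 2 : ℝ) : ℂ) with hadef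
  have hbq : ∀ n : ℕ, b * q ^ n = (q : ℝ) ^ (k + n : ℤ) := by
    intro n
    rw [hb, zpow_add₀ hq, zpow_natCast]
  have hstep : ∀ n : ℕ, w n - w (n + 1) = ((1 - q : ℝ) : ℂ) * (2 * (nu : ℂ) * Complex.I) * a n := by
    intro n
    have hx : (q : ℝ) ^ (k + n : ℤ) ≠ 0 := zpow_ne_zero _ hq
    have h1 : (q : ℝ) ^ (k + ((n + 1 : ℕ) : ℤ)) = q * (q : ℝ) ^ (k + n : ℤ) := by
      have h2 : (k + ((n + 1 : ℕ) : ℤ)) = (k + n : ℤ) + 1 := by push_cast; ring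
      rw [h2, zpow_add_one₀ hq]; ring
    have e : w n - w (n + 1)
        = qWronskian q F G ((q : ℝ) ^ (k + n : ℤ))
          - qWronskian q F G (q * (q : ℝ) ^ (k + n : ℤ)) := by
      simp only [hwdef, h1]
    rw [e, key _ hx, hlam (k + n)]
    have hab : a n = (((q : ℝ) ^ (k + n : ℤ) : ℝ) : ℂ)
        * ((‖F ((q : ℝ) ^ (k + n : ℤ))‖ ^ 2 : ℝ) : ℂ) := by
      simp only [hadef, ← hbq n]
      push_cast
      ring
    rw [hab]
    push_cast
    ring
  -- summability
  have haS : Summable a := by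
    have h := hS.map (Complex.ofRealHom : ℝ →+* ℂ).toAddMonoidHom Complex.continuous_ofReal
    rw [hadef]
    exact h
  have hdS : Summable (fun n => w n - w (n + 1)) := by
    simp only [hstep]
    exact (haS.mul_left _)
  -- the tail tends to W0
  have hwlim : Tendsto w atTop (𝓝 W0) := by
    have hphi : Tendsto (fun N : ℕ => (k + N : ℤ).toNat) atTop atTop := by
      apply tendsto_atTop_atTop.2
      intro M
      exact ⟨M + k.natAbs, fun N hN => by omega⟩
    have := hW0.comp hphi
    apply this.congr'
    filter_upwards [eventually_ge_atTop k.natAbs] with N hN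
    have hk : (0 : ℤ) ≤ k + N := by omega
    simp only [Function.comp, hwdef]
    congr 1
    rw [← zpow_natCast (q : ℝ) (k + (N : ℤ)).toNat, Int.toNat_of_nonneg hk]
  -- telescoping sum
  have htel : ∑' n, (w n - w (n + 1)) = w 0 - W0 := by
    have h1 : Tendsto (fun N : ℕ => ∑ n ∈ Finset.range N, (w n - w (n + 1))) atTop
        (𝓝 (∑' n, (w n - w (n + 1)))) := hdS.hasSum.tendsto_sum_nat
    have h2 : (fun N : ℕ => ∑ n ∈ Finset.range N, (w n - w (n + 1)))
        = fun N => w 0 - w N := by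
      funext N
      exact Finset.sum_range_sub' w N
    rw [h2] at h1
    have h3 : Tendsto (fun N : ℕ => w 0 - w N) atTop (𝓝 (w 0 - W0)) :=
      tendsto_const_nhds.sub hwlim
    exact tendsto_nhds_unique h1 h3
  have hmain : ((1 - q : ℝ) : ℂ) * (2 * (nu : ℂ) * Complex.I) * ∑' n, a n = w 0 - W0 := by
    rw [← htel]
    rw [← tsum_mul_left]
    exact tsum_congr fun n => (hstep n).symm
  -- identify w 0 with the Wronskian at b
  have hw0 : w 0 = qWronskian q F G b := by
    rw [hwdef, hb]
    norm_num
  -- identify the complex tsum with the real one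
  have hts : ∑' n, a n = ((∑' n : ℕ, q ^ n * b * ‖F (b * q ^ n)‖ ^ 2 : ℝ) : ℂ) := by
    rw [hadef, Complex.ofReal_tsum]
  rw [hts, hw0] at hmain
  set Sr : ℝ := ∑' n : ℕ, q ^ n * b * ‖F (b * q ^ n)‖ ^ 2 with hSrdef
  simp only [jackson0bR]
  have hSrC : ((Sr : ℝ) : ℂ)
      = ∑' n : ℕ, (q : ℂ) ^ n * (b : ℂ) * ((‖F (b * q ^ n)‖ : ℝ) : ℂ) ^ 2 := by
    rw [hSrdef, Complex.ofReal_tsum]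
    push_cast
    rfl
  push_cast at hmain ⊢
  linear_combination (-Complex.I) * hmain
    + 2 * (nu : ℂ) * (1 - (q : ℂ)) * (Sr : ℂ) * Complex.I_sq
    + 2 * (nu : ℂ) * ((q : ℂ) - 1) * hSrC
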